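/- Let $3 \le k \le t$ and $\gamma > 0$, and let $H$ be a balanced $t$-partite $k$-graph with classes $V_1, \dots, V_t$ each of size $n$ satisfying $\widetilde{\delta}_{k-1}(H) \ge (1 - (\binom{t-2}{k-1} + 2\binom{t-2}{k-2})^{-1} + \gamma) n$. Then for every $i \in [t]$ and all distinct vertices $u, v \in V_i$, there are at least $(\gamma n)^{t-1}$ legal sets $T$ consisting of one vertex from each class $V_j$ with $j \ne i$, such that both $T \cup \{u\}$ and $T \cup \{v\}$ span copies of the complete $k$-graph $K_t^k$ in $H$. -/

import Mathlib

open Finset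
open scoped Classical

/-- A set of vertices of the `t`-partite vertex set `Fin t × Fin n` is legal if it
meets each class in at most one vertex. -/
def Legal {t n : ℕ} (S : Finset (Fin t × Fin n)) : Prop :=
  ∀ u ∈ S, ∀ v ∈ S, u.1 = v.1 → u = v

/-- `H` is a `t`-partite `k`-uniform hypergraph with classes of size `n`. -/
def IsPartiteKGraph (t n k : ℕ) (H : Finset (Finset (Fin t × Fin n))) : Prop :=
  ∀ e ∈ H, e.card = k ∧ Legal e

/-- The minimum partite codegree of `H` is at least `d`. -/
def CodegGE (t n k : ℕ) (H : Finset (Finset (Fin t × Fin n))) (d : ℝ) : Prop :=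
  ∀ T : Finset (Fin t × Fin n), T.card = k - 1 → Legal T →
    ∀ j : Fin t, (∀ v ∈ T, v.1 ≠ j) →
      d ≤ ((Finset.univ.filter (fun x : Fin n => insert (j, x) T ∈ H)).card : ℝ)

/-- `S` spans a copy of the complete `k`-graph `K_t^k` in `H` (one vertex per class). -/
def SpansClique (t n k : ℕ) (H : Finset (Finset (Fin t × Fin n)))
    (S : Finset (Fin t × Fin n)) : Prop :=
  S.card = t ∧ Legal S ∧ ∀ e ⊆ S, e.card = k → e ∈ H

/-- `M` is a perfect `K_t^k`-matching in `H`. -/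
def IsPerfectKtMatching (t n k : ℕ) (H M : Finset (Finset (Fin t × Fin n))) : Prop :=
  (∀ S ∈ M, SpansClique t n k H S) ∧
  (M : Set (Finset (Fin t × Fin n))).PairwiseDisjoint id ∧
  ∀ v : Fin t × Fin n, ∃ S ∈ M, v ∈ S

/-- `w` is a perfect fractional `K_t^k`-matching of `H`. -/
def IsPerfectFracMatching (t n k : ℕ) (H : Finset (Finset (Fin t × Fin n)))
    (w : Finset (Fin t × Fin n) → ℝ) : Prop :=
  (∀ S, 0 ≤ w S ∧ w S ≤ 1) ∧
  (∀ S, w S ≠ 0 → SpansClique t n k H S) ∧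
  (∀ v : Fin t × Fin n, ∑ S ∈ Finset.univ.filter (fun S => v ∈ S), w S ≤ 1) ∧
  ∑ S : Finset (Fin t × Fin n), w S = (n : ℝ)


section Aux

variable {t n k : ℕ}

lemma legal_subset {S T : Finset (Fin t × Fin n)} (h : S ⊆ T) (hT : Legal T) : Legal S :=
  fun a ha b hb hab => hT a (h ha) b (h hb) hab

lemma legal_insert {S : Finset (Fin t × Fin n)} {a : Fin t × Fin n}
    (hS : Legal S) (ha : ∀ y ∈ S, y.1 ≠ a.1) : Legal (insert a S) := by
  intro x hx y hy hxy
  rw [Finset.mem_insert] at hx hy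
  rcases hx with hx | hx
  · rcases hy with hy | hy
    · rw [hx, hy]
    · exfalso; apply ha y hy; rw [← hxy, hx]
  · rcases hy with hy | hy
    · exfalso; apply ha x hx; rw [hxy, hy]
    · exact hS x hx y hy hxy

/-- A partial set of already chosen vertices which is "good": legal, avoiding class `i`,
and all its `k`-subsets together with `u` or `v` are edges. -/
def Good (t n k : ℕ) (H : Finset (Finset (Fin t × Fin n))) (i : Fin t)
    (u v : Fin t × Fin n) (S : Finset (Fin t × Fin n)) : Prop :=
  Legal S ∧ (∀ x ∈ S, x.1 ≠ i) ∧
  (∀ e ⊆ insert u S, e.card = k → e ∈ H) ∧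
  (∀ e ⊆ insert v S, e.card = k → e ∈ H)

lemma ext_lemma (t n k : ℕ) (hk : 3 ≤ k) (hkt : k ≤ t)
    (γ : ℝ) (hγ : 0 < γ)
    (hγD : γ * (((t - 2).choose (k - 1) : ℝ) + 2 * ((t - 2).choose (k - 2) : ℝ)) ≤ 1)
    (H : Finset (Finset (Fin t × Fin n)))
    (hδ : CodegGE t n k H
      ((1 - (((t - 2).choose (k - 1) : ℝ) + 2 * ((t - 2).choose (k - 2) : ℝ))⁻¹ + γ) * n))
    (i : Fin t) (u v : Fin t × Fin n) (hu : u.1 = i) (hv : v.1 = i)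
    (S : Finset (Fin t × Fin n)) (hS : Good t n k H i u v S)
    (hScard : S.card ≤ t - 2)
    (j : Fin t) (hji : j ≠ i) (hSj : ∀ x ∈ S, x.1 ≠ j) :
    γ * n ≤ ((univ.filter (fun x : Fin n =>
      Good t n k H i u v (insert (j, x) S))).card : ℝ) := by
  set D : ℝ := ((t - 2).choose (k - 1) : ℝ) + 2 * ((t - 2).choose (k - 2) : ℝ) with hDdef
  have hD1 : (1 : ℝ) ≤ D := by
    have h1 : 1 ≤ (t - 2).choose (k - 2) := Nat.succ_le_of_lt (Nat.choose_pos (by omega))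
    have h1' : (1 : ℝ) ≤ ((t - 2).choose (k - 2) : ℝ) := by exact_mod_cast h1
    have h0 : (0 : ℝ) ≤ ((t - 2).choose (k - 1) : ℝ) := Nat.cast_nonneg _
    rw [hDdef]; linarith
  have hD0 : D ≠ 0 := by linarith
  set 𝒮 : Finset (Finset (Fin t × Fin n)) :=
    (Finset.powersetCard (k - 1) S ∪ (Finset.powersetCard (k - 2) S).image (insert u)) ∪
      (Finset.powersetCard (k - 2) S).image (insert v) with h𝒮def
  have hsubP : Finset.powersetCard (k - 1) S ⊆ 𝒮 :=
    Finset.Subset.trans Finset.subset_union_left Finset.subset_union_left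
  have hsubU : (Finset.powersetCard (k - 2) S).image (insert u) ⊆ 𝒮 :=
    Finset.Subset.trans Finset.subset_union_right Finset.subset_union_left
  have hsubV : (Finset.powersetCard (k - 2) S).image (insert v) ⊆ 𝒮 :=
    Finset.subset_union_right
  have hlegal_u : Legal (insert u S) :=
    legal_insert hS.1 (fun y hy => by rw [hu]; exact hS.2.1 y hy)
  have hlegal_v : Legal (insert v S) :=
    legal_insert hS.1 (fun y hy => by rw [hv]; exact hS.2.1 y hy)
  -- properties of members of 𝒮
  have himgprop : ∀ w : Fin t × Fin n, w.1 = i → Legal (insert w S) →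
      ∀ T' ∈ (Finset.powersetCard (k - 2) S).image (insert w),
        T'.card = k - 1 ∧ Legal T' ∧ (∀ y ∈ T', y.1 ≠ j) := by
    intro w hw hlw T' hT'
    obtain ⟨T₀, hT₀, rfl⟩ := Finset.mem_image.1 hT'
    obtain ⟨hsub, hcard⟩ := Finset.mem_powersetCard.1 hT₀
    have hwT₀ : w ∉ T₀ := by
      intro hmem
      exact hS.2.1 w (hsub hmem) hw
    refine ⟨?_, ?_, ?_⟩
    · rw [Finset.card_insert_of_notMem hwT₀, hcard]; omega
    · exact legal_subset (Finset.insert_subset_insert _ hsub) hlw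
    · intro y hy
      rcases Finset.mem_insert.1 hy with rfl | hy
      · rw [hw]; exact Ne.symm hji
      · exact hSj y (hsub hy)
  have hprops : ∀ T' ∈ 𝒮, T'.card = k - 1 ∧ Legal T' ∧ (∀ y ∈ T', y.1 ≠ j) := by
    intro T' hT'
    rcases Finset.mem_union.1 hT' with h | h
    · rcases Finset.mem_union.1 h with h | h
      · obtain ⟨hsub, hcard⟩ := Finset.mem_powersetCard.1 h
        exact ⟨hcard, legal_subset hsub hS.1, fun y hy => hSj y (hsub hy)⟩
      · exact himgprop u hu hlegal_u T' h
    · exact himgprop v hv hlegal_v T' h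
  -- cardinality of 𝒮
  have h𝒮card : (𝒮.card : ℝ) ≤ D := by
    have h1 : 𝒮.card ≤
        (Finset.powersetCard (k - 1) S).card +
          ((Finset.powersetCard (k - 2) S).image (insert u)).card +
          ((Finset.powersetCard (k - 2) S).image (insert v)).card :=
      le_trans (Finset.card_union_le _ _) (add_le_add_left (Finset.card_union_le _ _) _)
    have h2 : 𝒮.card ≤ S.card.choose (k - 1) + S.card.choose (k - 2) + S.card.choose (k - 2) := by
      refine le_trans h1 ?_
      gcongr
      · rw [Finset.card_powersetCard]
      · exact le_trans Finset.card_image_le (le_of_eq (Finset.card_powersetCard _ _))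
      · exact le_trans Finset.card_image_le (le_of_eq (Finset.card_powersetCard _ _))
    have h3 : 𝒮.card ≤ (t - 2).choose (k - 1) + ((t - 2).choose (k - 2) + (t - 2).choose (k - 2)) := by
      refine le_trans h2 ?_
      have a1 := Nat.choose_le_choose (k - 1) hScard
      have a2 := Nat.choose_le_choose (k - 2) hScard
      omega
    rw [hDdef]
    push_cast
    exact_mod_cast le_trans (Nat.cast_le.2 h3) (by push_cast; ring_nf; exact le_refl _)
  -- degree bound per member of 𝒮
  have hdeg : ∀ T' ∈ 𝒮,
      ((univ.filter (fun x : Fin n => insert (j, x) T' ∉ H)).card : ℝ) ≤ (D⁻¹ - γ) * n := by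
    intro T' hT'
    obtain ⟨hcard, hlegal, hclass⟩ := hprops T' hT'
    have h1 := hδ T' hcard hlegal j hclass
    have h2 : (univ.filter (fun x : Fin n => insert (j, x) T' ∈ H)).card +
        (univ.filter (fun x : Fin n => insert (j, x) T' ∉ H)).card = n := by
      rw [Finset.card_filter_add_card_filter_not]
      simp
    have h2' : ((univ.filter (fun x : Fin n => insert (j, x) T' ∈ H)).card : ℝ) +
        ((univ.filter (fun x : Fin n => insert (j, x) T' ∉ H)).card : ℝ) = n := by
      exact_mod_cast h2
    rw [hDdef] at h1 ⊢
    nlinarith [h1, h2']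
  -- the good set
  set g : Finset (Fin n) := univ.filter (fun x : Fin n => ∀ T' ∈ 𝒮, insert (j, x) T' ∈ H)
    with hgdef
  set B : Finset (Fin n) := univ.filter (fun x : Fin n => ¬ ∀ T' ∈ 𝒮, insert (j, x) T' ∈ H)
    with hBdef
  have hgB : g.card + B.card = n := by
    rw [hgdef, hBdef, Finset.card_filter_add_card_filter_not]
    simp
  have hBsub : B ⊆ 𝒮.biUnion (fun T' => univ.filter (fun x : Fin n => insert (j, x) T' ∉ H)) := by
    intro x hx
    rw [hBdef, Finset.mem_filter] at hx
    push_neg at hx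
    obtain ⟨T', hT', hmem⟩ := hx.2
    exact Finset.mem_biUnion.2 ⟨T', hT', Finset.mem_filter.2 ⟨Finset.mem_univ _, hmem⟩⟩
  have hBcard : (B.card : ℝ) ≤ D * ((D⁻¹ - γ) * n) := by
    have h1 : B.card ≤ ∑ T' ∈ 𝒮, (univ.filter (fun x : Fin n => insert (j, x) T' ∉ H)).card :=
      le_trans (Finset.card_le_card hBsub) (Finset.card_biUnion_le)
    have h2 : ((∑ T' ∈ 𝒮, (univ.filter (fun x : Fin n => insert (j, x) T' ∉ H)).card : ℕ) : ℝ)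
        = ∑ T' ∈ 𝒮, ((univ.filter (fun x : Fin n => insert (j, x) T' ∉ H)).card : ℝ) := by
      push_cast; rfl
    have h3 : (B.card : ℝ) ≤ ∑ T' ∈ 𝒮, ((univ.filter (fun x : Fin n => insert (j, x) T' ∉ H)).card : ℝ) := by
      rw [← h2]; exact_mod_cast h1
    have h4 : ∑ T' ∈ 𝒮, ((univ.filter (fun x : Fin n => insert (j, x) T' ∉ H)).card : ℝ)
        ≤ 𝒮.card * ((D⁻¹ - γ) * n) := by
      calc ∑ T' ∈ 𝒮, ((univ.filter (fun x : Fin n => insert (j, x) T' ∉ H)).card : ℝ)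
          ≤ ∑ _T' ∈ 𝒮, (D⁻¹ - γ) * n := Finset.sum_le_sum hdeg
        _ = 𝒮.card * ((D⁻¹ - γ) * n) := by rw [Finset.sum_const, nsmul_eq_mul]
    have hγle : γ ≤ D⁻¹ := by
      have hDinv : D * D⁻¹ = 1 := mul_inv_cancel₀ hD0
      nlinarith
    have hnn : 0 ≤ (D⁻¹ - γ) * n := by
      have : (0:ℝ) ≤ (n:ℝ) := Nat.cast_nonneg _
      nlinarith
    calc (B.card : ℝ) ≤ 𝒮.card * ((D⁻¹ - γ) * n) := le_trans h3 h4
      _ ≤ D * ((D⁻¹ - γ) * n) := mul_le_mul_of_nonneg_right h𝒮card hnn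
  -- good elements are good
  have hgsub : g ⊆ univ.filter (fun x : Fin n => Good t n k H i u v (insert (j, x) S)) := by
    intro x hx
    rw [hgdef, Finset.mem_filter] at hx
    have hx := hx.2
    have key : ∀ w : Fin t × Fin n, w.1 = i →
        (∀ e ⊆ insert w S, e.card = k → e ∈ H) →
        ((Finset.powersetCard (k - 2) S).image (insert w) ⊆ 𝒮) →
        ∀ e ⊆ insert w (insert (j, x) S), e.card = k → e ∈ H := by
      intro w hw hedge hsub e he hecard
      by_cases hje : (j, x) ∈ e
      · have hT'sub : e.erase (j, x) ⊆ insert w S := by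
          intro a ha
          have ha' := he (Finset.mem_of_mem_erase ha)
          have hane : a ≠ (j, x) := Finset.ne_of_mem_erase ha
          rcases Finset.mem_insert.1 ha' with rfl | ha''
          · exact Finset.mem_insert_self _ _
          · rcases Finset.mem_insert.1 ha'' with h | h
            · exact absurd h hane
            · exact Finset.mem_insert_of_mem h
        have hT'card : (e.erase (j, x)).card = k - 1 := by
          rw [Finset.card_erase_of_mem hje, hecard]
        have hT'mem : e.erase (j, x) ∈ 𝒮 := by
          by_cases hwmem : w ∈ e.erase (j, x)
          · apply hsub
            refine Finset.mem_image.2 ⟨(e.erase (j, x)).erase w, ?_,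
              Finset.insert_erase hwmem⟩
            refine Finset.mem_powersetCard.2 ⟨?_, ?_⟩
            · intro a ha
              have h1 := hT'sub (Finset.mem_of_mem_erase ha)
              rcases Finset.mem_insert.1 h1 with rfl | h
              · exact absurd rfl (Finset.ne_of_mem_erase ha)
              · exact h
            · rw [Finset.card_erase_of_mem hwmem, hT'card]; omega
          · apply hsubP
            refine Finset.mem_powersetCard.2 ⟨?_, hT'card⟩
            intro a ha
            rcases Finset.mem_insert.1 (hT'sub ha) with rfl | h
            · exact absurd ha hwmem
            · exact h
        have := hx _ hT'mem
        rwa [Finset.insert_erase hje] at this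
      · apply hedge e ?_ hecard
        intro a ha
        rcases Finset.mem_insert.1 (he ha) with rfl | h
        · exact Finset.mem_insert_self _ _
        · rcases Finset.mem_insert.1 h with rfl | h'
          · exact absurd ha hje
          · exact Finset.mem_insert_of_mem h'
    refine Finset.mem_filter.2 ⟨Finset.mem_univ _, ?_, ?_, ?_, ?_⟩
    · exact legal_insert hS.1 (fun y hy => hSj y hy)
    · intro y hy
      rcases Finset.mem_insert.1 hy with rfl | hy
      · exact hji
      · exact hS.2.1 y hy
    · exact key u hu hS.2.2.1 hsubU
    · exact key v hv hS.2.2.2 hsubV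
  -- put it together
  have hgcard : γ * n ≤ (g.card : ℝ) := by
    have h1 : (g.card : ℝ) + (B.card : ℝ) = n := by exact_mod_cast hgB
    have hγD' : γ * 1 ≤ γ * D := by
      have := hγ.le
      nlinarith
    have hDinv : D * D⁻¹ = 1 := mul_inv_cancel₀ hD0
    have h2 : D * ((D⁻¹ - γ) * n) = (1 - γ * D) * n := by
      linear_combination (n : ℝ) * hDinv
    rw [h2] at hBcard
    nlinarith [Nat.cast_nonneg (α := ℝ) n]
  calc γ * n ≤ (g.card : ℝ) := hgcard
    _ ≤ _ := by exact_mod_cast Finset.card_le_card hgsub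

lemma count_lemma (t n k : ℕ) (hk : 3 ≤ k) (hkt : k ≤ t)
    (γ : ℝ) (hγ : 0 < γ)
    (hγD : γ * (((t - 2).choose (k - 1) : ℝ) + 2 * ((t - 2).choose (k - 2) : ℝ)) ≤ 1)
    (H : Finset (Finset (Fin t × Fin n)))
    (hδ : CodegGE t n k H
      ((1 - (((t - 2).choose (k - 1) : ℝ) + 2 * ((t - 2).choose (k - 2) : ℝ))⁻¹ + γ) * n))
    (i : Fin t) (u v : Fin t × Fin n) (hu : u.1 = i) (hv : v.1 = i) :
    ∀ L : List (Fin t), L.Nodup → (∀ j ∈ L, j ≠ i) →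
      ∀ S : Finset (Fin t × Fin n), Good t n k H i u v S →
        (∀ x ∈ S, x.1 ∉ L) → S.card + L.length ≤ t - 1 →
        (γ * n) ^ L.length ≤
          ((univ.filter (fun T : Finset (Fin t × Fin n) =>
            Good t n k H i u v T ∧ S ⊆ T ∧
            T.image Prod.fst = S.image Prod.fst ∪ L.toFinset)).card : ℝ) := by
  intro L
  induction L with
  | nil =>
    intro _ _ S hGood _ _
    rw [List.length_nil, pow_zero]
    have hmem : S ∈ univ.filter (fun T : Finset (Fin t × Fin n) =>
        Good t n k H i u v T ∧ S ⊆ T ∧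
        T.image Prod.fst = S.image Prod.fst ∪ ([] : List (Fin t)).toFinset) := by
      refine Finset.mem_filter.2 ⟨Finset.mem_univ _, hGood, Finset.Subset.refl _, ?_⟩
      simp
    have : 0 < (univ.filter (fun T : Finset (Fin t × Fin n) =>
        Good t n k H i u v T ∧ S ⊆ T ∧
        T.image Prod.fst = S.image Prod.fst ∪ ([] : List (Fin t)).toFinset)).card :=
      Finset.card_pos.2 ⟨S, hmem⟩
    exact_mod_cast this
  | cons j L' ih =>
    intro hnodup hni S hGood hSL hcard
    have ht3 : 3 ≤ t := le_trans hk hkt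
    have hji : j ≠ i := hni j (List.mem_cons_self)
    have hjL' : j ∉ L' := (List.nodup_cons.1 hnodup).1
    have hnodup' : L'.Nodup := (List.nodup_cons.1 hnodup).2
    have hni' : ∀ j' ∈ L', j' ≠ i := fun j' hj' => hni j' (List.mem_cons_of_mem _ hj')
    have hlen : (j :: L').length = L'.length + 1 := rfl
    rw [hlen] at hcard
    set g : Finset (Fin n) :=
      univ.filter (fun x : Fin n => Good t n k H i u v (insert (j, x) S)) with hgdef
    have hgbound : γ * n ≤ (g.card : ℝ) :=
      ext_lemma t n k hk hkt γ hγ hγD H hδ i u v hu hv S hGood (by omega) j hji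
        (fun x hx => fun h => hSL x hx (h ▸ List.mem_cons_self))
    set F : Finset (Fin t × Fin n) → List (Fin t) → Finset (Finset (Fin t × Fin n)) :=
      fun S₀ L₀ => univ.filter (fun T : Finset (Fin t × Fin n) =>
        Good t n k H i u v T ∧ S₀ ⊆ T ∧
        T.image Prod.fst = S₀.image Prod.fst ∪ L₀.toFinset) with hFdef
    -- each piece is large
    have hih : ∀ x ∈ g, (γ * n) ^ L'.length ≤ ((F (insert (j, x) S) L').card : ℝ) := by
      intro x hx
      have hxGood : Good t n k H i u v (insert (j, x) S) :=
        (Finset.mem_filter.1 hx).2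
      have hjxS : (j, x) ∉ S := fun h => hSL _ h (List.mem_cons_self)
      refine ih hnodup' hni' (insert (j, x) S) hxGood ?_ ?_
      · intro y hy
        rcases Finset.mem_insert.1 hy with rfl | hy
        · exact hjL'
        · exact fun h => hSL y hy (List.mem_cons_of_mem _ h)
      · rw [Finset.card_insert_of_notMem hjxS]; omega
    -- disjointness
    have hdisj : ∀ x ∈ g, ∀ y ∈ g, x ≠ y →
        Disjoint (F (insert (j, x) S) L') (F (insert (j, y) S) L') := by
      intro x _ y _ hxy
      rw [Finset.disjoint_left]
      intro T hTx hTy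
      have h1 := (Finset.mem_filter.1 hTx).2
      have h2 := (Finset.mem_filter.1 hTy).2
      have hmx : (j, x) ∈ T := h1.2.1 (Finset.mem_insert_self _ _)
      have hmy : (j, y) ∈ T := h2.2.1 (Finset.mem_insert_self _ _)
      have := h1.1.1 (j, x) hmx (j, y) hmy rfl
      exact hxy (congrArg Prod.snd this)
    -- inclusion
    have hincl : g.biUnion (fun x => F (insert (j, x) S) L') ⊆ F S (j :: L') := by
      intro T hT
      obtain ⟨x, hxg, hTx⟩ := Finset.mem_biUnion.1 hT
      have h1 := (Finset.mem_filter.1 hTx).2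
      refine Finset.mem_filter.2 ⟨Finset.mem_univ _, h1.1, ?_, ?_⟩
      · exact Finset.Subset.trans (Finset.subset_insert _ _) h1.2.1
      · rw [h1.2.2, Finset.image_insert, List.toFinset_cons]
        rw [Finset.insert_union, Finset.union_insert]
    have hbiu : ((F S (j :: L')).card : ℝ) ≥
        ∑ x ∈ g, ((F (insert (j, x) S) L').card : ℝ) := by
      have h1 : (g.biUnion (fun x => F (insert (j, x) S) L')).card =
          ∑ x ∈ g, (F (insert (j, x) S) L').card := Finset.card_biUnion hdisj
      have h2 : (g.biUnion (fun x => F (insert (j, x) S) L')).card ≤ (F S (j :: L')).card :=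
        Finset.card_le_card hincl
      rw [h1] at h2
      have := (Nat.cast_le (α := ℝ)).2 h2
      rw [Nat.cast_sum] at this
      exact this
    have hsum : (g.card : ℝ) * (γ * n) ^ L'.length ≤
        ∑ x ∈ g, ((F (insert (j, x) S) L').card : ℝ) := by
      have := Finset.card_nsmul_le_sum g
        (fun x => ((F (insert (j, x) S) L').card : ℝ)) ((γ * n) ^ L'.length) hih
      rwa [nsmul_eq_mul] at this
    have hpow0 : (0 : ℝ) ≤ (γ * n) ^ L'.length := by positivity
    calc (γ * n) ^ (j :: L').length = (γ * n) ^ L'.length * (γ * n) := by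
          rw [hlen, pow_succ]
      _ = (γ * n) * (γ * n) ^ L'.length := by ring
      _ ≤ (g.card : ℝ) * (γ * n) ^ L'.length := mul_le_mul_of_nonneg_right hgbound hpow0
      _ ≤ ∑ x ∈ g, ((F (insert (j, x) S) L').card : ℝ) := hsum
      _ ≤ ((F S (j :: L')).card : ℝ) := hbiu

end Aux

/-- Proposition 3.1: any two vertices of the same class have many common extensions
to copies of `K_t^k`. -/
theorem stmt4 (t n k : ℕ) (hk : 3 ≤ k) (hkt : k ≤ t) (γ : ℝ) (hγ : 0 < γ)
    (H : Finset (Finset (Fin t × Fin n))) (hH : IsPartiteKGraph t n k H)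
    (hδ : CodegGE t n k H
      ((1 - (((t - 2).choose (k - 1) : ℝ) + 2 * ((t - 2).choose (k - 2) : ℝ))⁻¹ + γ) * n)) :
    ∀ i : Fin t, ∀ u v : Fin t × Fin n, u.1 = i → v.1 = i → u ≠ v →
      (γ * n) ^ (t - 1) ≤
        ((Finset.univ.filter (fun T : Finset (Fin t × Fin n) =>
          T.card = t - 1 ∧ Legal T ∧ (∀ x ∈ T, x.1 ≠ i) ∧
          SpansClique t n k H (insert u T) ∧
          SpansClique t n k H (insert v T))).card : ℝ) := by
  intro i u v hu hv huv
  have ht3 : 3 ≤ t := le_trans hk hkt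
  rcases Nat.eq_zero_or_pos n with hn | hn
  · subst hn
    have h0 : (γ * ((0 : ℕ) : ℝ)) ^ (t - 1) = 0 := by
      rw [Nat.cast_zero, mul_zero]
      exact zero_pow (by omega)
    rw [h0]
    positivity
  -- derive γ * D ≤ 1
  set D : ℝ := ((t - 2).choose (k - 1) : ℝ) + 2 * ((t - 2).choose (k - 2) : ℝ) with hDdef
  have hD1 : (1 : ℝ) ≤ D := by
    have h1 : 1 ≤ (t - 2).choose (k - 2) := Nat.succ_le_of_lt (Nat.choose_pos (by omega))
    have h1' : (1 : ℝ) ≤ ((t - 2).choose (k - 2) : ℝ) := by exact_mod_cast h1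
    have h0 : (0 : ℝ) ≤ ((t - 2).choose (k - 1) : ℝ) := Nat.cast_nonneg _
    rw [hDdef]; linarith
  have hD0 : D ≠ 0 := by linarith
  have hγD : γ * D ≤ 1 := by
    set z : Fin n := ⟨0, hn⟩
    set T0 : Finset (Fin t × Fin n) :=
      (univ : Finset (Fin (k - 1))).image
        (fun m => ((⟨m.1 + 1, by have := m.2; omega⟩ : Fin t), z)) with hT0def
    have hT0card : T0.card = k - 1 := by
      have hinj : Function.Injective
          (fun m : Fin (k - 1) => ((⟨m.1 + 1, by have := m.2; omega⟩ : Fin t), z)) := by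
        intro a b hab
        have : a.1 + 1 = b.1 + 1 := congrArg Fin.val (congrArg Prod.fst hab)
        exact Fin.ext (by omega)
      rw [hT0def, Finset.card_image_of_injective _ hinj, Finset.card_univ, Fintype.card_fin]
    have hT0legal : Legal T0 := by
      intro x hx y hy hxy
      rw [hT0def] at hx hy
      obtain ⟨a, _, rfl⟩ := Finset.mem_image.1 hx
      obtain ⟨b, _, rfl⟩ := Finset.mem_image.1 hy
      have : a.1 + 1 = b.1 + 1 := congrArg Fin.val hxy
      have hab : a = b := Fin.ext (by omega)
      rw [hab]
    have hT0class : ∀ y ∈ T0, y.1 ≠ (⟨0, by omega⟩ : Fin t) := by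
      intro y hy
      rw [hT0def] at hy
      obtain ⟨a, _, rfl⟩ := Finset.mem_image.1 hy
      intro h
      have : a.1 + 1 = 0 := congrArg Fin.val h
      omega
    have h1 := hδ T0 hT0card hT0legal ⟨0, by omega⟩ hT0class
    have h2 : ((univ.filter (fun x : Fin n =>
        insert ((⟨0, by omega⟩ : Fin t), x) T0 ∈ H)).card : ℝ) ≤ n := by
      have := Finset.card_filter_le (univ : Finset (Fin n))
        (fun x : Fin n => insert ((⟨0, by omega⟩ : Fin t), x) T0 ∈ H)
      have h3 : (univ.filter (fun x : Fin n =>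
          insert ((⟨0, by omega⟩ : Fin t), x) T0 ∈ H)).card ≤ n := by
        simpa using this
      exact_mod_cast h3
    have hn1 : (1 : ℝ) ≤ n := by exact_mod_cast hn
    have hδn : (1 - D⁻¹ + γ) * n ≤ n := le_trans h1 h2
    have hγle : γ ≤ D⁻¹ := by nlinarith
    have hDpos : (0 : ℝ) < D := by linarith
    have := mul_le_mul_of_nonneg_right hγle hDpos.le
    rwa [inv_mul_cancel₀ hD0] at this
  -- the list of classes other than i
  set L : List (Fin t) := ((univ : Finset (Fin t)).erase i).toList with hLdef
  have hLnodup : L.Nodup := Finset.nodup_toList _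
  have hLmem : ∀ j ∈ L, j ≠ i := by
    intro j hj
    rw [hLdef, Finset.mem_toList] at hj
    exact (Finset.mem_erase.1 hj).1
  have hLfin : L.toFinset = (univ : Finset (Fin t)).erase i := by
    rw [hLdef, Finset.toList_toFinset]
  have hLlen : L.length = t - 1 := by
    rw [hLdef, Finset.length_toList, Finset.card_erase_of_mem (Finset.mem_univ _),
      Finset.card_univ, Fintype.card_fin]
  have hGoodEmpty : Good t n k H i u v (∅ : Finset (Fin t × Fin n)) := by
    refine ⟨fun a ha => absurd ha (Finset.notMem_empty a), fun x hx => absurd hx (Finset.notMem_empty x), ?_, ?_⟩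
    · intro e he hcard
      have h1 : e = ∅ ∨ e = {u} := by simpa using he
      rcases h1 with rfl | rfl <;> simp at hcard <;> omega
    · intro e he hcard
      have h1 : e = ∅ ∨ e = {v} := by simpa using he
      rcases h1 with rfl | rfl <;> simp at hcard <;> omega
  have hcount := count_lemma t n k hk hkt γ hγ hγD H hδ i u v hu hv L hLnodup hLmem
    ∅ hGoodEmpty (fun x hx => absurd hx (Finset.notMem_empty x)) (by rw [Finset.card_empty, hLlen]; omega)
  rw [hLlen] at hcount
  refine le_trans hcount ?_
  have hsub : (univ.filter (fun T : Finset (Fin t × Fin n) =>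
      Good t n k H i u v T ∧ (∅ : Finset (Fin t × Fin n)) ⊆ T ∧
      T.image Prod.fst = (∅ : Finset (Fin t × Fin n)).image Prod.fst ∪ L.toFinset)) ⊆
      (univ.filter (fun T : Finset (Fin t × Fin n) =>
        T.card = t - 1 ∧ Legal T ∧ (∀ x ∈ T, x.1 ≠ i) ∧
        SpansClique t n k H (insert u T) ∧
        SpansClique t n k H (insert v T))) := by
    intro T hT
    obtain ⟨-, hGoodT, -, himage⟩ := Finset.mem_filter.1 hT
    rw [Finset.image_empty, Finset.empty_union, hLfin] at himage
    have hclass : ∀ x ∈ T, x.1 ≠ i := by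
      intro x hx
      have : x.1 ∈ (univ : Finset (Fin t)).erase i := by
        rw [← himage]; exact Finset.mem_image.2 ⟨x, hx, rfl⟩
      exact (Finset.mem_erase.1 this).1
    have hinj : Set.InjOn Prod.fst ↑T := fun a ha b hb h => hGoodT.1 a ha b hb h
    have hTcard : T.card = t - 1 := by
      have h1 := Finset.card_image_of_injOn hinj
      rw [himage, Finset.card_erase_of_mem (Finset.mem_univ _), Finset.card_univ,
        Fintype.card_fin] at h1
      omega
    have hspan : ∀ w : Fin t × Fin n, w.1 = i →
        (∀ e ⊆ insert w T, e.card = k → e ∈ H) → SpansClique t n k H (insert w T) := by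
      intro w hw hedge
      have hwT : w ∉ T := fun h => hclass w h hw
      refine ⟨?_, ?_, hedge⟩
      · rw [Finset.card_insert_of_notMem hwT, hTcard]; omega
      · exact legal_insert hGoodT.1 (fun y hy => by rw [hw]; exact hclass y hy)
    refine Finset.mem_filter.2 ⟨Finset.mem_univ _, hTcard, hGoodT.1, hclass,
      hspan u hu hGoodT.2.2.1, hspan v hv hGoodT.2.2.2⟩
  exact_mod_cast Finset.card_le_card hsub
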